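/- The polynomial h_n = x_1 y_1 + ... + x_n y_n - z(1-z) is irreducible in the polynomial ring k[x_1,...,x_n,y_1,...,y_n,z] over a field k, for n ≥ 1. -/

import Mathlib

open Polynomial in
/-- A linear polynomial `C a * X + C b` with `a` prime and `a ∤ b` is irreducible. -/
theorem irreducible_linear_aux {R : Type*} [CommRing R] [IsDomain R] {a b : R}
    (ha : Prime a) (hb : ¬ a ∣ b) :
    Irreducible (C a * X + C b : R[X]) := by
  set p : R[X] := C a * X + C b with hp
  have hdeg : p.natDegree = 1 := natDegree_linear ha.ne_zero
  have hp0 : p ≠ 0 := fun h => by simp [h] at hdeg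
  have key : ∀ g : R[X], g ∣ p → g.natDegree = 0 → IsUnit g := by
    intro g hg hg0
    obtain ⟨r, rfl⟩ := natDegree_eq_zero.mp hg0
    have hcoeff := (C_dvd_iff_dvd_coeff r p).mp hg
    have h1 : r ∣ a := by simpa [hp] using hcoeff 1
    have h0 : r ∣ b := by simpa [hp] using hcoeff 0
    rcases ha.irreducible.dvd_iff.mp h1 with h | h
    · exact isUnit_C.mpr h
    · exact absurd (h.dvd.trans h0) hb
  constructor
  · exact not_isUnit_of_natDegree_pos p (by omega)
  · intro u v huv
    have hu0 : u ≠ 0 := fun h => hp0 (by simp [huv, h])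
    have hv0 : v ≠ 0 := fun h => hp0 (by simp [huv, h])
    have hsum : u.natDegree + v.natDegree = 1 := by
      rw [← natDegree_mul hu0 hv0, ← huv, hdeg]
    rcases Nat.eq_zero_or_pos u.natDegree with h | h
    · exact Or.inl (key u ⟨v, huv⟩ h)
    · exact Or.inr (key v ⟨u, by rw [huv, mul_comm]⟩ (by omega))

open MvPolynomial in
/-- `X s` is prime in a polynomial ring over a domain. -/
theorem mvPolynomial_prime_X {σ k : Type*} [CommRing k] [IsDomain k] (s : σ) :
    Prime (X s : MvPolynomial σ k) := by
  classical
  let e : σ ≃ Option {t // t ≠ s} := (Equiv.optionSubtypeNe s).symm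
  let Φ := (renameEquiv k e).trans (optionEquivLeft k {t // t ≠ s})
  have hX : Φ (X s) = Polynomial.X := by
    simp only [Φ, AlgEquiv.trans_apply, renameEquiv_apply, rename_X]
    rw [show e s = none from Equiv.optionSubtypeNe_symm_self s,
      optionEquivLeft_X_none]
  rw [← MulEquiv.prime_iff Φ.toRingEquiv.toMulEquiv]
  show Prime (Φ (X s))
  rw [hX]
  exact Polynomial.prime_X

/-- The polynomial `h_n = x_1 y_1 + ⋯ + x_n y_n - z(1-z)` in
`k[x_1,…,x_n,y_1,…,y_n,z]`, where `Sum.inl (Sum.inl i)` plays the role of `x_i`,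
`Sum.inl (Sum.inr i)` of `y_i`, and `Sum.inr ()` of `z`. -/
noncomputable def quadricEvenPoly (k : Type*) [Field k] (n : ℕ) :
    MvPolynomial ((Fin n ⊕ Fin n) ⊕ Unit) k :=
  (∑ i : Fin n,
      MvPolynomial.X (Sum.inl (Sum.inl i)) * MvPolynomial.X (Sum.inl (Sum.inr i))) -
    MvPolynomial.X (Sum.inr ()) * (1 - MvPolynomial.X (Sum.inr ()))

open MvPolynomial in
theorem quadricEvenPoly_irreducible (k : Type*) [Field k] (n : ℕ) (hn : 1 ≤ n) :
    Irreducible (quadricEvenPoly k n) := by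
  classical
  set i₀ : Fin n := ⟨0, hn⟩ with hi₀
  set w : (Fin n ⊕ Fin n) ⊕ Unit := Sum.inl (Sum.inr i₀) with hw
  let S := {t : (Fin n ⊕ Fin n) ⊕ Unit // t ≠ w}
  let e : ((Fin n ⊕ Fin n) ⊕ Unit) ≃ Option S := (Equiv.optionSubtypeNe w).symm
  let Φ : MvPolynomial ((Fin n ⊕ Fin n) ⊕ Unit) k ≃ₐ[k] Polynomial (MvPolynomial S k) :=
    (renameEquiv k e).trans (optionEquivLeft k S)
  rw [← MulEquiv.irreducible_iff Φ.toRingEquiv.toMulEquiv]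
  have ΦXw : Φ (X w) = Polynomial.X := by
    simp only [Φ, AlgEquiv.trans_apply, renameEquiv_apply, rename_X]
    rw [show e w = none from Equiv.optionSubtypeNe_symm_self w, optionEquivLeft_X_none]
  have ΦX : ∀ (t) (h : t ≠ w), Φ (X t) = Polynomial.C (X (⟨t, h⟩ : S)) := by
    intro t h
    simp only [Φ, AlgEquiv.trans_apply, renameEquiv_apply, rename_X]
    rw [show e t = some ⟨t, h⟩ from Equiv.optionSubtypeNe_symm_of_ne h, optionEquivLeft_X_some]
  -- the distinguished variables of S
  have hu : (Sum.inl (Sum.inl i₀) : (Fin n ⊕ Fin n) ⊕ Unit) ≠ w := by simp [hw]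
  have hz : (Sum.inr () : (Fin n ⊕ Fin n) ⊕ Unit) ≠ w := by simp [hw]
  have hx : ∀ i : Fin n, (Sum.inl (Sum.inl i) : (Fin n ⊕ Fin n) ⊕ Unit) ≠ w := by
    intro i; simp [hw]
  have hy : ∀ i : Fin n, i ≠ i₀ → (Sum.inl (Sum.inr i) : (Fin n ⊕ Fin n) ⊕ Unit) ≠ w := by
    intro i hi; simp [hw, hi]
  set u' : S := ⟨Sum.inl (Sum.inl i₀), hu⟩ with hu'
  set z' : S := ⟨Sum.inr (), hz⟩ with hz'
  set xv : Fin n → S := fun i => ⟨Sum.inl (Sum.inl i), hx i⟩ with hxv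
  set yv : Fin n → S := fun i =>
    if h : (Sum.inl (Sum.inr i) : (Fin n ⊕ Fin n) ⊕ Unit) = w then z' else ⟨_, h⟩ with hyv
  set b : MvPolynomial S k :=
    (∑ i ∈ Finset.univ.erase i₀, X (xv i) * X (yv i)) - X z' * (1 - X z') with hb
  have key : Φ (quadricEvenPoly k n) = Polynomial.C (X u') * Polynomial.X + Polynomial.C b := by
    rw [quadricEvenPoly, map_sub, map_sum]
    simp only [map_mul, map_sub, map_one]
    rw [← Finset.add_sum_erase _ _ (Finset.mem_univ i₀)]
    rw [ΦX _ (hx i₀), show (Sum.inl (Sum.inr i₀) : (Fin n ⊕ Fin n) ⊕ Unit) = w from hw.symm, ΦXw]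
    rw [Finset.sum_congr rfl (fun i hi => by
      rw [ΦX _ (hx i), ΦX _ (hy i (Finset.mem_erase.mp hi).1),
        ← map_mul Polynomial.C,
        show (⟨Sum.inl (Sum.inr i), hy i (Finset.mem_erase.mp hi).1⟩ : S) = yv i by
          rw [hyv]; exact (dif_neg (hy i (Finset.mem_erase.mp hi).1)).symm])]
    rw [← map_sum Polynomial.C, ΦX _ hz, hb]
    push_cast [map_sub, map_mul, map_one]
    ring
  show Irreducible (Φ (quadricEvenPoly k n))
  rw [key]
  apply irreducible_linear_aux (mvPolynomial_prime_X u')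
  -- ¬ X u' ∣ b
  intro hdvd
  let θ : MvPolynomial S k →ₐ[k] Polynomial k :=
    aeval (fun t => if t = z' then Polynomial.X else 0)
  have hθu : θ (X u') = 0 := by
    simp only [θ, aeval_X]
    exact if_neg (fun hcon => absurd (congrArg Subtype.val hcon) (by simp))
  have hθb : θ b = -(Polynomial.X * (1 - Polynomial.X)) := by
    have h1 : ∀ i : Fin n, θ (X (xv i)) = 0 := fun i => by
      simp only [θ, aeval_X, hxv]
      exact if_neg (fun hcon => absurd (congrArg Subtype.val hcon) (by simp))
    have h2 : θ (X z') = Polynomial.X := by simp [θ, aeval_X]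
    rw [hb, map_sub, map_sum]
    simp only [map_mul, map_sub, map_one, h1, h2, zero_mul, Finset.sum_const_zero]
    ring
  have h0 : (0 : Polynomial k) ∣ θ b := hθu ▸ map_dvd θ hdvd
  rw [zero_dvd_iff, hθb, neg_eq_zero, mul_eq_zero] at h0
  rcases h0 with h | h
  · exact Polynomial.X_ne_zero h
  · rw [sub_eq_zero] at h
    have := congrArg Polynomial.natDegree h
    simp [Polynomial.natDegree_one, Polynomial.natDegree_X] at this
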